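/- arXiv:1708.03281 — 3 statements merged into one kernel-verified Lean document; each statement's English description precedes it below -/
import Mathlib

section
/- Let p > 1 be a real number and let ϱ ∈ (0,1). The function f(α) = ((1 + α)^p − (1 + ϱ)) / α^p attains its maximum over the interval ((1 + ϱ)^{1/p} − 1, ∞) at the point α* = (1 + ϱ)^{1/(p−1)} − 1, and its maximum value equals f(α*) = (1 + ϱ)·((1 + ϱ)^{1/(p−1)} − 1)^{1−p}. -/
/-- For `p > 1` and `ϱ ∈ (0,1)`, the function
`f(α) = ((1 + α)^p - (1 + ϱ)) / α^p` attains its maximum over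
`((1 + ϱ)^(1/p) - 1, ∞)` at `α* = (1 + ϱ)^(1/(p-1)) - 1`, with maximum value
`(1 + ϱ) ((1 + ϱ)^(1/(p-1)) - 1)^(1-p)`. -/
theorem stmt_2 (p ϱ : ℝ) (hp : 1 < p) (hϱ : ϱ ∈ Set.Ioo (0 : ℝ) 1) :
    (1 + ϱ) ^ (1 / (p - 1)) - 1 ∈ Set.Ioi ((1 + ϱ) ^ (1 / p) - 1) ∧
    (∀ α ∈ Set.Ioi ((1 + ϱ) ^ (1 / p) - 1),
      ((1 + α) ^ p - (1 + ϱ)) / α ^ p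
        ≤ ((1 + ((1 + ϱ) ^ (1 / (p - 1)) - 1)) ^ p - (1 + ϱ))
            / ((1 + ϱ) ^ (1 / (p - 1)) - 1) ^ p) ∧
    ((1 + ((1 + ϱ) ^ (1 / (p - 1)) - 1)) ^ p - (1 + ϱ))
        / ((1 + ϱ) ^ (1 / (p - 1)) - 1) ^ p
      = (1 + ϱ) * ((1 + ϱ) ^ (1 / (p - 1)) - 1) ^ (1 - p) := by
  obtain ⟨hϱ0, hϱ1⟩ := hϱ
  have h1ϱ : (1 : ℝ) < 1 + ϱ := by linarith
  have h1ϱ0 : (0 : ℝ) < 1 + ϱ := by linarith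
  have hp1 : 0 < p - 1 := by linarith
  set S : ℝ := (1 + ϱ) ^ (1 / (p - 1)) with hSdef
  have hS1 : 1 < S :=
    (Real.one_lt_rpow_iff_of_pos h1ϱ0).mpr (Or.inl ⟨h1ϱ, by positivity⟩)
  have hS0 : 0 < S := by linarith
  have hT0 : 0 < S - 1 := by linarith
  have hA : S ^ (p - 1) = 1 + ϱ := by
    rw [hSdef, one_div, Real.rpow_inv_rpow h1ϱ0.le (by positivity)]
  -- Part 1
  have hlt : (1 + ϱ) ^ (1 / p) < S := by
    rw [hSdef]
    apply Real.rpow_lt_rpow_left_iff h1ϱ |>.mpr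
    apply one_div_lt_one_div_of_lt (by linarith) (by linarith)
  have hup1 : 1 < (1 + ϱ) ^ (1 / p) :=
    (Real.one_lt_rpow_iff_of_pos h1ϱ0).mpr (Or.inl ⟨h1ϱ, by positivity⟩)
  -- Part 3 (the value)
  have hSp : S ^ p = (1 + ϱ) * S := by
    have : S ^ p = S ^ (p - 1) * S ^ (1 : ℝ) := by
      rw [← Real.rpow_add hS0]; ring_nf
    rw [this, hA, Real.rpow_one]
  have hT1p : (S - 1) ^ (1 - p) = (S - 1) / (S - 1) ^ p := by
    rw [Real.rpow_sub hT0, Real.rpow_one]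
  have hTp0 : (0 : ℝ) < (S - 1) ^ p := Real.rpow_pos_of_pos hT0 _
  have hval : ((1 + (S - 1)) ^ p - (1 + ϱ)) / (S - 1) ^ p
      = (1 + ϱ) * (S - 1) ^ (1 - p) := by
    have h1S : 1 + (S - 1) = S := by ring
    rw [h1S, hSp, hT1p]
    field_simp
  refine ⟨Set.mem_Ioi.mpr (by linarith), ?_, hval⟩
  -- Part 2
  intro α hα
  rw [Set.mem_Ioi] at hα
  have hα0 : 0 < α := by linarith
  have hαp0 : (0 : ℝ) < α ^ p := Real.rpow_pos_of_pos hα0 _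
  rw [hval]
  rw [div_le_iff₀ hαp0]
  -- reduce to the convexity inequality
  have hTp1 : (0 : ℝ) < (S - 1) ^ (p - 1) := Real.rpow_pos_of_pos hT0 _
  have key : (1 + α) ^ p ≤ (1 + ϱ) + (1 + ϱ) / (S - 1) ^ (p - 1) * α ^ p := by
    have hconv := (convexOn_rpow hp.le).2 (Set.mem_Ici.mpr hS0.le)
      (Set.mem_Ici.mpr (show (0:ℝ) ≤ α * S / (S - 1) by positivity))
      (show (0:ℝ) ≤ 1 / S by positivity)
      (show (0:ℝ) ≤ (S - 1) / S by positivity)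
      (show 1 / S + (S - 1) / S = 1 by field_simp; ring)
    simp only [smul_eq_mul] at hconv
    have hx : 1 / S * S + (S - 1) / S * (α * S / (S - 1)) = 1 + α := by
      field_simp
    rw [hx] at hconv
    have hy : (α * S / (S - 1)) ^ p = α ^ p * S ^ p / (S - 1) ^ p := by
      rw [Real.div_rpow (by positivity) hT0.le, Real.mul_rpow hα0.le hS0.le]
    have hSp' : S ^ p = S ^ (p - 1) * S := by
      rw [hSp, hA]
    have hTp' : (S - 1) ^ p = (S - 1) ^ (p - 1) * (S - 1) := by
      rw [← Real.rpow_add_one hT0.ne' (p - 1)]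
      ring_nf
    have hrhs : 1 / S * S ^ p + (S - 1) / S * (α * S / (S - 1)) ^ p
        = (1 + ϱ) + (1 + ϱ) / (S - 1) ^ (p - 1) * α ^ p := by
      rw [hy, hSp', hTp', hA]
      field_simp
    linarith [hconv, hrhs.symm.le]
  have hmul : (1 + ϱ) * ((S - 1) ^ (1 - p)) * α ^ p
      = (1 + ϱ) / (S - 1) ^ (p - 1) * α ^ p := by
    have : (S - 1) ^ (1 - p) = 1 / (S - 1) ^ (p - 1) := by
      rw [show (1 - p) = -(p-1) by ring, Real.rpow_neg hT0.le, one_div]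
    rw [this]; ring
  rw [hmul]
  linarith [key]
end

section
/- Let n ≥ 1, let k be a positive integer, let θ > 0, and let J ⊆ ℝⁿ be a Borel set with ℋ^{n−1}(J) < ∞. Let B be the set of lattice points z ∈ (2/k)·ℤⁿ such that ℋ^{n−1}(J ∩ (z + (−4/k, 4/k)ⁿ)) > θ·k^{−(n−1)}. Then B is finite with at most 4ⁿ·θ^{−1}·k^{n−1}·ℋ^{n−1}(J) elements, and the Lebesgue measure of the union ⋃_{z∈B} (z + (−4/k, 4/k)ⁿ) is at most 32ⁿ·ℋ^{n−1}(J)/(k·θ). -/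
open MeasureTheory Filter
open scoped ENNReal Classical

/-- The open axis-parallel cube of center `z` and sidelength `8/k` in `ℝⁿ`. -/
def bigCube (n k : ℕ) (z : EuclideanSpace ℝ (Fin n)) : Set (EuclideanSpace ℝ (Fin n)) :=
  {x | ∀ i, x i ∈ Set.Ioo (z i - 4 / k) (z i + 4 / k)}

/-- The lattice `(2/k)·ℤⁿ` in `ℝⁿ`. -/
def latticePts (n k : ℕ) : Set (EuclideanSpace ℝ (Fin n)) :=
  {z | ∀ i, ∃ m : ℤ, z i = m * (2 / k)}

lemma measurableSet_bigCube (n k : ℕ) (z : EuclideanSpace ℝ (Fin n)) :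
    MeasurableSet (bigCube n k z) := by
  have : bigCube n k z =
      ⋂ i, (fun x : EuclideanSpace ℝ (Fin n) => x i) ⁻¹' Set.Ioo (z i - 4 / k) (z i + 4 / k) := by
    ext x; simp [bigCube, Set.mem_iInter]
  rw [this]
  exact MeasurableSet.iInter fun i => ((measurable_pi_apply i).comp (WithLp.measurable_ofLp 2 _)) measurableSet_Ioo

lemma volume_bigCube (n k : ℕ) (z : EuclideanSpace ℝ (Fin n)) :
    volume (bigCube n k z) = ENNReal.ofReal (8 / k) ^ n := by
  have hpre : bigCube n k z = (MeasurableEquiv.toLp 2 (Fin n → ℝ)).symm ⁻¹'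
      (Set.univ.pi fun i => Set.Ioo (z i - 4 / k) (z i + 4 / k)) := by
    ext x; simp [bigCube, MeasurableEquiv.coe_toLp_symm, Set.mem_pi]
  rw [hpre, (EuclideanSpace.volume_preserving_symm_measurableEquiv_toLp (Fin n)).measure_preimage
    ((MeasurableSet.univ_pi fun i => measurableSet_Ioo).nullMeasurableSet)]
  rw [volume_pi_pi]
  have : ∀ i : Fin n, volume (Set.Ioo (z i - 4 / k) (z i + 4 / k)) = ENNReal.ofReal (8 / k) := by
    intro i
    rw [Real.volume_Ioo]
    congr 1
    ring
  simp [this, Finset.prod_const]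

lemma floor_coord (k : ℕ) (hk : 0 < k) (t : ℝ) (m : ℤ) (ht : t = m * (2 / k)) :
    ⌊(k : ℝ) * t / 2⌋ = m ∧ t = (⌊(k : ℝ) * t / 2⌋ : ℝ) * (2 / k) := by
  have hkR : (0 : ℝ) < k := by exact_mod_cast hk
  have he : (k : ℝ) * t / 2 = m := by rw [ht]; field_simp
  rw [he, Int.floor_intCast]
  exact ⟨rfl, ht⟩

lemma count_le (n k : ℕ) (hk : 0 < k) (x : EuclideanSpace ℝ (Fin n))
    (S : Finset (EuclideanSpace ℝ (Fin n))) (hS : ↑S ⊆ latticePts n k) :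
    (S.filter fun z => x ∈ bigCube n k z).card ≤ 4 ^ n := by
  have hkR : (0 : ℝ) < k := by exact_mod_cast hk
  set T : Finset (Fin n → ℤ) :=
    Fintype.piFinset fun i => Finset.Icc (⌊(k : ℝ) * x i / 2⌋ - 1) (⌊(k : ℝ) * x i / 2⌋ + 2) with hT
  have hcardT : T.card = 4 ^ n := by
    rw [hT, Fintype.card_piFinset]
    have : ∀ i : Fin n,
        (Finset.Icc (⌊(k : ℝ) * x i / 2⌋ - 1) (⌊(k : ℝ) * x i / 2⌋ + 2)).card = 4 := by
      intro i; rw [Int.card_Icc]; omega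
    simp [this]
  calc (S.filter fun z => x ∈ bigCube n k z).card ≤ T.card := by
        apply Finset.card_le_card_of_injOn (fun z => fun i => ⌊(k : ℝ) * z i / 2⌋)
        · intro z hz
          rw [Finset.mem_coe, Finset.mem_filter] at hz
          obtain ⟨hzS, hzx⟩ := hz
          have hzl := hS hzS
          rw [hT, Finset.mem_coe, Fintype.mem_piFinset]
          intro i
          obtain ⟨m, hm⟩ := hzl i
          obtain ⟨hfl, -⟩ := floor_coord k hk (z i) m hm
          beta_reduce
          rw [hfl, Finset.mem_Icc]
          have hx := hzx i
          obtain ⟨h1, h2⟩ := hx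
          -- h1 : z i - 4/k < x i, h2 : x i < z i + 4/k, z i = m * (2/k)
          rw [hm] at h1 h2
          have e1 : 2 * (m : ℝ) - 4 < (k : ℝ) * x i := by
            have := mul_lt_mul_of_pos_right h1 hkR
            have e : ((m : ℝ) * (2 / k) - 4 / k) * k = 2 * m - 4 := by field_simp
            rw [e] at this; linarith [this]
          have e2 : (k : ℝ) * x i < 2 * m + 4 := by
            have := mul_lt_mul_of_pos_right h2 hkR
            have e : ((m : ℝ) * (2 / k) + 4 / k) * k = 2 * m + 4 := by field_simp
            rw [e] at this; linarith [this]
          constructor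
          · have hfle : ((⌊(k : ℝ) * x i / 2⌋ : ℤ) : ℝ) ≤ (k : ℝ) * x i / 2 := Int.floor_le _
            have : ((⌊(k : ℝ) * x i / 2⌋ : ℤ) : ℝ) - 2 < (m : ℝ) := by linarith
            have : (⌊(k : ℝ) * x i / 2⌋ : ℤ) - 2 < m := by exact_mod_cast this
            omega
          · have hflt : (k : ℝ) * x i / 2 < ((⌊(k : ℝ) * x i / 2⌋ : ℤ) : ℝ) + 1 :=
              Int.lt_floor_add_one _
            have : (m : ℝ) < ((⌊(k : ℝ) * x i / 2⌋ : ℤ) : ℝ) + 3 := by linarith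
            have : m < (⌊(k : ℝ) * x i / 2⌋ : ℤ) + 3 := by exact_mod_cast this
            omega
        · intro z hz z' hz' hf
          rw [Finset.coe_filter, Set.mem_setOf_eq] at hz hz'
          ext i
          obtain ⟨m, hm⟩ := hS hz.1 i
          obtain ⟨m', hm'⟩ := hS hz'.1 i
          obtain ⟨-, h⟩ := floor_coord k hk (z i) m hm
          obtain ⟨-, h'⟩ := floor_coord k hk (z' i) m' hm'
          rw [h, h']
          have : ⌊(k : ℝ) * z i / 2⌋ = ⌊(k : ℝ) * z' i / 2⌋ := congrFun hf i
          rw [this]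
    _ = 4 ^ n := hcardT

lemma sum_le (n k : ℕ) (hk : 0 < k) (J : Set (EuclideanSpace ℝ (Fin n)))
    (hJ : MeasurableSet J) (S : Finset (EuclideanSpace ℝ (Fin n)))
    (hS : ↑S ⊆ latticePts n k) :
    ∑ z ∈ S, μH[(n : ℝ) - 1] (J ∩ bigCube n k z) ≤ 4 ^ n * μH[(n : ℝ) - 1] J := by
  have hmeas : ∀ z, MeasurableSet (J ∩ bigCube n k z) :=
    fun z => hJ.inter (measurableSet_bigCube n k z)
  calc ∑ z ∈ S, μH[(n : ℝ) - 1] (J ∩ bigCube n k z)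
      = ∑ z ∈ S, ∫⁻ x, (J ∩ bigCube n k z).indicator (fun _ => (1:ℝ≥0∞)) x ∂μH[(n : ℝ) - 1] := by
        exact Finset.sum_congr rfl fun z _ => (lintegral_indicator_one (hmeas z)).symm
    _ = ∫⁻ x, ∑ z ∈ S, (J ∩ bigCube n k z).indicator (fun _ => (1:ℝ≥0∞)) x ∂μH[(n : ℝ) - 1] :=
        (lintegral_finset_sum _ fun z _ => measurable_one.indicator (hmeas z)).symm
    _ ≤ ∫⁻ x, J.indicator (fun _ => (4 ^ n : ℝ≥0∞)) x ∂μH[(n : ℝ) - 1] := by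
        refine lintegral_mono fun x => ?_
        by_cases hx : x ∈ J
        · rw [Set.indicator_of_mem hx]
          have hterm : ∀ z ∈ S, (J ∩ bigCube n k z).indicator (fun _ => (1:ℝ≥0∞)) x
              = if x ∈ bigCube n k z then 1 else 0 := by
            intro z _
            by_cases hc : x ∈ bigCube n k z
            · rw [Set.indicator_of_mem (Set.mem_inter hx hc), if_pos hc]
            · rw [Set.indicator_of_notMem (fun h => hc h.2), if_neg hc]
          rw [Finset.sum_congr rfl hterm, Finset.sum_boole]
          have := count_le n k hk x S hS
          exact_mod_cast Nat.cast_le.mpr this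
        · rw [Set.indicator_of_notMem hx]
          have hterm : ∀ z ∈ S, (J ∩ bigCube n k z).indicator (fun _ => (1:ℝ≥0∞)) x = 0 :=
            fun z _ => Set.indicator_of_notMem (fun h => hx h.1) _
          rw [Finset.sum_congr rfl hterm, Finset.sum_const, smul_zero]
    _ = 4 ^ n * μH[(n : ℝ) - 1] J := by
        rw [lintegral_indicator_const hJ]

/-- For `n ≥ 1`, `k ≥ 1`, `θ > 0` and a Borel set `J ⊆ ℝⁿ` with
`ℋ^{n-1}(J) < ∞`, the set `B` of lattice points `z ∈ (2/k)ℤⁿ` with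
`ℋ^{n-1}(J ∩ (z + (-4/k,4/k)ⁿ)) > θ k^{-(n-1)}` is finite, has at most
`4ⁿ θ⁻¹ k^{n-1} ℋ^{n-1}(J)` elements, and the Lebesgue measure of the union of the
corresponding cubes is at most `32ⁿ ℋ^{n-1}(J)/(kθ)`. -/
theorem stmt_6 (n : ℕ) (hn : 1 ≤ n) (k : ℕ) (hk : 0 < k) (θ : ℝ) (hθ : 0 < θ)
    (J : Set (EuclideanSpace ℝ (Fin n))) (hJ : MeasurableSet J)
    (hJfin : μH[(n : ℝ) - 1] J < ⊤)
    (B : Set (EuclideanSpace ℝ (Fin n)))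
    (hB : B = {z ∈ latticePts n k |
      ENNReal.ofReal θ / (k : ℝ≥0∞) ^ (n - 1) < μH[(n : ℝ) - 1] (J ∩ bigCube n k z)}) :
    B.Finite ∧
      (Nat.card B : ℝ≥0∞)
        ≤ 4 ^ n * (ENNReal.ofReal θ)⁻¹ * (k : ℝ≥0∞) ^ (n - 1) * μH[(n : ℝ) - 1] J ∧
      volume (⋃ z ∈ B, bigCube n k z)
        ≤ 32 ^ n * μH[(n : ℝ) - 1] J / ((k : ℝ≥0∞) * ENNReal.ofReal θ) := by
  set μJ := μH[(n : ℝ) - 1] J with hμJ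
  set θe := ENNReal.ofReal θ with hθe
  set ke := (k : ℝ≥0∞) with hke
  have hθ0 : θe ≠ 0 := by simp [hθe, ENNReal.ofReal_eq_zero]; linarith
  have hθtop : θe ≠ ⊤ := ENNReal.ofReal_ne_top
  have hk0 : ke ≠ 0 := by simp [hke]; omega
  have hktop : ke ≠ ⊤ := ENNReal.natCast_ne_top k
  have hkp0 : ke ^ (n - 1) ≠ 0 := pow_ne_zero _ hk0
  have hkptop : ke ^ (n - 1) ≠ ⊤ := ENNReal.pow_ne_top hktop
  set d := θe / ke ^ (n - 1) with hd
  have hd0 : d ≠ 0 := by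
    rw [hd]; exact ENNReal.div_ne_zero.mpr ⟨hθ0, hkptop⟩
  have hdtop : d ≠ ⊤ := by
    rw [hd]; exact (ENNReal.div_lt_top hθtop hkp0).ne
  set C := 4 ^ n * θe⁻¹ * ke ^ (n - 1) * μJ with hC
  have hCtop : C ≠ ⊤ := by
    rw [hC]
    exact ENNReal.mul_ne_top (ENNReal.mul_ne_top (ENNReal.mul_ne_top
      (ENNReal.pow_ne_top (by norm_num)) (ENNReal.inv_ne_top.mpr hθ0)) hkptop) hJfin.ne
  -- key: any finite subset of B has card bounded by C
  have key : ∀ S : Finset (EuclideanSpace ℝ (Fin n)), ↑S ⊆ B → (S.card : ℝ≥0∞) ≤ C := by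
    intro S hSB
    have hSlat : ↑S ⊆ latticePts n k := by
      intro z hz
      have := hSB hz
      rw [hB] at this
      exact this.1
    have hsum : (S.card : ℝ≥0∞) * d ≤ 4 ^ n * μJ := by
      have h1 : S.card • d ≤ ∑ z ∈ S, μH[(n : ℝ) - 1] (J ∩ bigCube n k z) := by
        apply Finset.card_nsmul_le_sum
        intro z hz
        have := hSB hz
        rw [hB] at this
        exact this.2.le
      rw [nsmul_eq_mul] at h1
      exact h1.trans (sum_le n k hk J hJ S hSlat)
    have hCd : C * d = 4 ^ n * μJ := by
      rw [hC, hd, div_eq_mul_inv]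
      have : 4 ^ n * θe⁻¹ * ke ^ (n - 1) * μJ * (θe * (ke ^ (n - 1))⁻¹)
          = (4 ^ n * μJ) * ((θe⁻¹ * θe) * (ke ^ (n - 1) * (ke ^ (n - 1))⁻¹)) := by ring
      rw [this, ENNReal.inv_mul_cancel hθ0 hθtop, ENNReal.mul_inv_cancel hkp0 hkptop,
        one_mul, mul_one]
    have := hsum.trans_eq hCd.symm
    exact (ENNReal.mul_le_mul_iff_left hd0 hdtop).mp this
  have hfin : B.Finite := by
    by_contra hinf
    have hinf' : B.Infinite := hinf
    obtain ⟨N, hN⟩ := ENNReal.exists_nat_gt hCtop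
    obtain ⟨S, hSB, hScard⟩ := hinf'.exists_subset_card_eq N
    have := key S hSB
    rw [hScard] at this
    exact absurd this (not_le.mpr hN)
  refine ⟨hfin, ?_, ?_⟩
  · have hcard : Nat.card B = hfin.toFinset.card := by
      rw [Nat.card_coe_set_eq, Set.ncard_eq_toFinset_card _ hfin]
    rw [hcard]
    exact key hfin.toFinset (by rw [Set.Finite.coe_toFinset])
  · have hUeq : (⋃ z ∈ B, bigCube n k z) = ⋃ z ∈ hfin.toFinset, bigCube n k z := by
      ext x; simp [Set.Finite.mem_toFinset]
    rw [hUeq]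
    have h1 : volume (⋃ z ∈ hfin.toFinset, bigCube n k z)
        ≤ ∑ z ∈ hfin.toFinset, volume (bigCube n k z) :=
      measure_biUnion_finset_le _ _
    have h2 : ∑ z ∈ hfin.toFinset, volume (bigCube n k z)
        = (hfin.toFinset.card : ℝ≥0∞) * ENNReal.ofReal (8 / k) ^ n := by
      rw [Finset.sum_congr rfl fun z _ => volume_bigCube n k z, Finset.sum_const,
        nsmul_eq_mul]
    have hv : ENNReal.ofReal (8 / (k : ℝ)) = 8 / ke := by
      rw [ENNReal.ofReal_div_of_pos (by exact_mod_cast hk)]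
      norm_num [hke]
    have hcard : (hfin.toFinset.card : ℝ≥0∞) ≤ C :=
      key hfin.toFinset (by rw [Set.Finite.coe_toFinset])
    have h3 : volume (⋃ z ∈ hfin.toFinset, bigCube n k z) ≤ C * (8 / ke) ^ n := by
      refine (h1.trans_eq h2).trans ?_
      rw [hv]
      exact mul_le_mul_left hcard _
    refine h3.trans ?_
    rw [ENNReal.le_div_iff_mul_le (Or.inl (mul_ne_zero hk0 hθ0))
      (Or.inl (ENNReal.mul_ne_top hktop hθtop))]
    have hkn0 : ke ^ n ≠ 0 := pow_ne_zero _ hk0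
    have hkntop : ke ^ n ≠ ⊤ := ENNReal.pow_ne_top hktop
    have hpow : ke ^ (n - 1) * ke = ke ^ n := by
      rw [← pow_succ]; congr 1; omega
    refine le_of_eq ?_
    calc C * (8 / ke) ^ n * (ke * θe)
        = (4 ^ n * 8 ^ n * μJ) * ((θe⁻¹ * θe) * ((ke ^ (n - 1) * ke) * (ke ^ n)⁻¹)) := by
          rw [hC, div_eq_mul_inv, mul_pow, ENNReal.inv_pow]; ring
      _ = 32 ^ n * μJ := by
          rw [hpow, ENNReal.mul_inv_cancel hkn0 hkntop, ENNReal.inv_mul_cancel hθ0 hθtop,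
            one_mul, mul_one, ← mul_pow]
          norm_num
end

section
/- Let n ≥ 1, let μ ∈ (0,1), and let A_μ : ℝⁿ → ℝⁿ be the linear map A_μ(y₁,…,y_{n−1}, y_n) = (y₁,…,y_{n−1}, −μ·y_n). Let S ⊆ {y ∈ ℝⁿ : y_n < 0} be Lebesgue measurable, let v : ℝⁿ → ℝᵐ be Lebesgue measurable, let c ∈ ℝᵐ, and let x₀ ∈ ℝⁿ with (x₀)_n = 0. Assume that for every ε > 0, ℒⁿ(S ∩ B_ϱ(x₀) ∩ {y : |v(y) − c| > ε})/ϱⁿ → 0 as ϱ → 0⁺. Then for every ε > 0, ℒⁿ(A_μ^{−1}(S) ∩ B_ϱ(x₀) ∩ {y : y_n > 0} ∩ {y : |v(A_μ y) − c| > ε})/ϱⁿ → 0 as ϱ → 0⁺. In other words, the reflected function v ∘ A_μ has the same one-sided approximate limit c at x₀ from the upper half-space as v has from the lower half-space. -/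
open MeasureTheory Filter Topology Metric

/-- For the map `A_μ(y₁,…,yₙ,y_{n+1}) = (y₁,…,yₙ,-μ y_{n+1})` with
`μ ∈ (0,1)`, if `v` has one-sided approximate limit `c` at `x₀` (on the hyperplane
`{y_{last} = 0}`) from the lower half-space relative to `S ⊆ {y_{last} < 0}`, then the
reflected function `v ∘ A_μ` has the same one-sided approximate limit `c` at `x₀` from
the upper half-space relative to `A_μ⁻¹(S)`. -/
theorem stmt_9 (n : ℕ) (μ : ℝ) (hμ : μ ∈ Set.Ioo (0 : ℝ) 1) (m : ℕ)
    (S : Set (EuclideanSpace ℝ (Fin (n + 1)))) (hSm : MeasurableSet S)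
    (hS : S ⊆ {y | y (Fin.last n) < 0})
    (v : EuclideanSpace ℝ (Fin (n + 1)) → EuclideanSpace ℝ (Fin m)) (hv : Measurable v)
    (c : EuclideanSpace ℝ (Fin m))
    (x₀ : EuclideanSpace ℝ (Fin (n + 1))) (hx₀ : x₀ (Fin.last n) = 0)
    (Aμ : EuclideanSpace ℝ (Fin (n + 1)) → EuclideanSpace ℝ (Fin (n + 1)))
    (hAμ : ∀ y i, Aμ y i = if i = Fin.last n then -μ * y i else y i)
    (hlim : ∀ ε : ℝ, 0 < ε → Tendsto
      (fun ϱ => (volume (S ∩ ball x₀ ϱ ∩ {y | ε < ‖v y - c‖})).toReal / ϱ ^ (n + 1))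
      (𝓝[>] (0 : ℝ)) (𝓝 0)) :
    ∀ ε : ℝ, 0 < ε → Tendsto
      (fun ϱ => (volume ((Aμ ⁻¹' S) ∩ ball x₀ ϱ ∩ {y | 0 < y (Fin.last n)}
          ∩ {y | ε < ‖v (Aμ y) - c‖})).toReal / ϱ ^ (n + 1))
      (𝓝[>] (0 : ℝ)) (𝓝 0) := by
  intro ε hε
  obtain ⟨hμ0, hμ1⟩ := hμ
  -- the linear map
  let L : EuclideanSpace ℝ (Fin (n+1)) →ₗ[ℝ] EuclideanSpace ℝ (Fin (n+1)) :=
    { toFun := fun y => WithLp.toLp 2 (fun i => if i = Fin.last n then -μ * y i else y i)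
      map_add' := by
        intro x y; ext i
        by_cases h : i = Fin.last n <;> simp [h, PiLp.add_apply] <;> ring
      map_smul' := by
        intro r x; ext i
        by_cases h : i = Fin.last n <;> simp [h, PiLp.smul_apply, smul_eq_mul] <;> ring }
  have hA : Aμ = ⇑L := by
    funext y; ext i; rw [hAμ]; rfl
  have hdet : LinearMap.det L = -μ := by
    let b := (EuclideanSpace.basisFun (Fin (n+1)) ℝ).toBasis
    rw [← LinearMap.det_toMatrix b]
    have hM : LinearMap.toMatrix b b L
        = Matrix.diagonal (fun i => if i = Fin.last n then -μ else 1) := by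
      ext i j
      rw [LinearMap.toMatrix_apply]
      simp only [b, L, Matrix.diagonal_apply, EuclideanSpace.single_apply,
        OrthonormalBasis.coe_toBasis_repr_apply, EuclideanSpace.basisFun_repr,
        OrthonormalBasis.coe_toBasis, EuclideanSpace.basisFun_apply, LinearMap.coe_mk,
        AddHom.coe_mk, mul_ite, mul_one, mul_zero]
      by_cases hij : i = j <;> by_cases hl : i = Fin.last n <;> simp [hij, hl]
    rw [hM, Matrix.det_diagonal]
    rw [Finset.prod_eq_single (Fin.last n) (fun i _ hi => by simp [hi]) (by simp)]
    simp
  have hdet0 : LinearMap.det L ≠ 0 := by rw [hdet]; simp [ne_of_gt hμ0]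
  -- preimage measure formula
  have hmeas : ∀ E : Set (EuclideanSpace ℝ (Fin (n+1))),
      volume (Aμ ⁻¹' E) = ENNReal.ofReal μ⁻¹ * volume E := by
    intro E
    rw [hA, MeasureTheory.Measure.addHaar_preimage_linearMap volume hdet0 E, hdet]
    congr 1
    rw [abs_inv, abs_neg, abs_of_pos hμ0]
  -- the inclusion
  have hincl : ∀ ϱ : ℝ, ((Aμ ⁻¹' S) ∩ ball x₀ ϱ ∩ {y | 0 < y (Fin.last n)}
      ∩ {y | ε < ‖v (Aμ y) - c‖}) ⊆ Aμ ⁻¹' (S ∩ ball x₀ ϱ ∩ {y | ε < ‖v y - c‖}) := by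
    intro ϱ y hy
    obtain ⟨⟨⟨hyS, hyB⟩, -⟩, hyv⟩ := hy
    refine ⟨⟨hyS, ?_⟩, hyv⟩
    rw [mem_ball, EuclideanSpace.dist_eq] at hyB ⊢
    refine lt_of_le_of_lt ?_ hyB
    apply Real.sqrt_le_sqrt
    apply Finset.sum_le_sum
    intro i _
    rw [hAμ]
    by_cases h : i = Fin.last n
    · subst h
      rw [hx₀, if_pos rfl, Real.dist_0_eq_abs, Real.dist_0_eq_abs, sq_abs, sq_abs,
        neg_mul, neg_sq, mul_pow]
      have h1 : μ ^ 2 ≤ 1 := by nlinarith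
      nlinarith [sq_nonneg (y (Fin.last n))]
    · rw [if_neg h]
  -- squeeze
  have key : ∀ ϱ : ℝ, 0 < ϱ →
      (volume ((Aμ ⁻¹' S) ∩ ball x₀ ϱ ∩ {y | 0 < y (Fin.last n)}
          ∩ {y | ε < ‖v (Aμ y) - c‖})).toReal / ϱ ^ (n + 1)
      ≤ μ⁻¹ * ((volume (S ∩ ball x₀ ϱ ∩ {y | ε < ‖v y - c‖})).toReal / ϱ ^ (n + 1)) := by
    intro ϱ hϱ
    rw [← mul_div_assoc]
    apply div_le_div_of_nonneg_right ?_ (by positivity)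
    have hfin : volume (S ∩ ball x₀ ϱ ∩ {y | ε < ‖v y - c‖}) < ⊤ :=
      lt_of_le_of_lt (measure_mono fun y hy => hy.1.2) measure_ball_lt_top
    calc (volume ((Aμ ⁻¹' S) ∩ ball x₀ ϱ ∩ {y | 0 < y (Fin.last n)}
          ∩ {y | ε < ‖v (Aμ y) - c‖})).toReal
        ≤ (volume (Aμ ⁻¹' (S ∩ ball x₀ ϱ ∩ {y | ε < ‖v y - c‖}))).toReal := by
          apply ENNReal.toReal_mono
          · rw [hmeas]
            exact (ENNReal.mul_lt_top ENNReal.ofReal_lt_top hfin).ne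
          · exact measure_mono (hincl ϱ)
      _ = μ⁻¹ * (volume (S ∩ ball x₀ ϱ ∩ {y | ε < ‖v y - c‖})).toReal := by
          rw [hmeas, ENNReal.toReal_mul, ENNReal.toReal_ofReal (by positivity)]
  have hlim' := (hlim ε hε).const_mul μ⁻¹
  rw [mul_zero] at hlim'
  apply squeeze_zero'
  · filter_upwards [self_mem_nhdsWithin] with ϱ hϱ
    have h0 : (0:ℝ) < ϱ := hϱ
    positivity
  · filter_upwards [self_mem_nhdsWithin] with ϱ hϱ
    exact key ϱ hϱ
  · exact hlim'
end
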